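/- Let (Ω, μ) be a probability space, let A : Ω → E_A, Z : Ω → E_Z, W : Ω → E_W be measurable maps into standard Borel spaces, and let U : Ω → ℝ be measurable. Let g : E_Z × E_A × ℝ → ℝ be measurable with u ↦ g(z, a, u) strictly increasing for every (z, a), and set X := fun ω => g (Z ω, A ω, U ω). Assume: (i) for every x ∈ ℝ, E[indicator {X ≤ x} | σ(Z, A, W)] = E[indicator {X ≤ x} | σ(Z, W)] μ-a.e. (X is conditionally independent of A given (Z, W)); (ii) for every u ∈ ℝ, E[indicator {U ≤ u} | σ(Z, A, W)] = E[indicator {U ≤ u} | σ(A, W)] μ-a.e. (U is conditionally independent of Z given (A, W)). Define V ω := (condDistrib X (Z, W) μ) ((Z ω, W ω)) (Set.Iic (X ω)) and V' ω := (condDistrib U (A, W) μ) ((A ω, W ω)) (Set.Iic (U ω)). Then V = V' μ-almost everywhere. -/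

import Mathlib

open MeasureTheory ProbabilityTheory

lemma meas_ext_iic_rat (ν₁ ν₂ : Measure ℝ) [IsProbabilityMeasure ν₁] [IsProbabilityMeasure ν₂]
    (h : ∀ q : ℚ, ν₁ (Set.Iic (q : ℝ)) = ν₂ (Set.Iic (q : ℝ))) : ν₁ = ν₂ := by
  refine ext_of_generate_finite _ ?_ Real.isPiSystem_Iic_rat ?_ (by simp)
  · rw [(inferInstance : BorelSpace ℝ).measurable_eq, Real.borel_eq_generateFrom_Iic_rat]
  · rintro s hs
    simp only [Set.mem_iUnion, Set.mem_singleton_iff] at hs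
    obtain ⟨q, rfl⟩ := hs
    exact h q

lemma condDistrib_ae_eq_of_condexp_ae_eq {Ω β₁ β₂ : Type*} [MeasurableSpace Ω]
    [MeasurableSpace β₁] [MeasurableSpace β₂]
    (μ : Measure Ω) [IsProbabilityMeasure μ]
    (Y : Ω → ℝ) (hY : Measurable Y)
    (T₁ : Ω → β₁) (T₂ : Ω → β₂) (hT₁ : Measurable T₁) (hT₂ : Measurable T₂)
    (h : ∀ q : ℚ,
      μ[Set.indicator {ω | Y ω ≤ (q : ℝ)} (fun _ => (1 : ℝ)) |
          MeasurableSpace.comap T₁ inferInstance]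
        =ᵐ[μ] μ[Set.indicator {ω | Y ω ≤ (q : ℝ)} (fun _ => (1 : ℝ)) |
          MeasurableSpace.comap T₂ inferInstance]) :
    ∀ᵐ ω ∂μ, condDistrib Y T₁ μ (T₁ ω) = condDistrib Y T₂ μ (T₂ ω) := by
  have hq : ∀ q : ℚ, ∀ᵐ ω ∂μ,
      condDistrib Y T₁ μ (T₁ ω) (Set.Iic (q : ℝ))
        = condDistrib Y T₂ μ (T₂ ω) (Set.Iic (q : ℝ)) := by
    intro q
    have h1 := condDistrib_ae_eq_condExp (μ := μ) hT₁ hY (measurableSet_Iic (a := (q : ℝ)))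
    have h2 := condDistrib_ae_eq_condExp (μ := μ) hT₂ hY (measurableSet_Iic (a := (q : ℝ)))
    have hpre : Y ⁻¹' Set.Iic (q : ℝ) = {ω | Y ω ≤ (q : ℝ)} := rfl
    rw [hpre] at h1 h2
    filter_upwards [h1, h2, h q] with ω e1 e2 e3
    have ht : (condDistrib Y T₁ μ (T₁ ω) (Set.Iic (q : ℝ))).toReal
        = (condDistrib Y T₂ μ (T₂ ω) (Set.Iic (q : ℝ))).toReal := by
      rw [← measureReal_def, ← measureReal_def, e1, e3, ← e2]
    exact (ENNReal.toReal_eq_toReal_iff' (measure_ne_top _ _) (measure_ne_top _ _)).mp ht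
  rw [← ae_all_iff] at hq
  filter_upwards [hq] with ω hω
  exact meas_ext_iic_rat _ _ hω


/-- Lemma 2 (feasible control variable): with `X = g(Z, A, U)` strictly increasing in `U`,
if `X` is conditionally independent of `A` given `(Z, W)` and `U` is conditionally independent
of `Z` given `(A, W)`, then the feasible conditional CDF
`V = F_{X|Z,W}(X | Z, W)` equals the infeasible `F_{U|A,W}(U | A, W)` almost surely. -/
theorem feasible_control_variable
    {Ω E_A E_Z E_W : Type*} [MeasurableSpace Ω]
    [MeasurableSpace E_A] [StandardBorelSpace E_A] [Nonempty E_A]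
    [MeasurableSpace E_Z] [StandardBorelSpace E_Z] [Nonempty E_Z]
    [MeasurableSpace E_W] [StandardBorelSpace E_W] [Nonempty E_W]
    (μ : Measure Ω) [IsProbabilityMeasure μ]
    (A : Ω → E_A) (Z : Ω → E_Z) (W : Ω → E_W) (U : Ω → ℝ)
    (hA : Measurable A) (hZ : Measurable Z) (hW : Measurable W) (hU : Measurable U)
    (g : E_Z × E_A × ℝ → ℝ) (hg : Measurable g)
    (hmono : ∀ (z : E_Z) (a : E_A), StrictMono fun u => g (z, a, u))
    (X : Ω → ℝ) (hX : ∀ ω, X ω = g (Z ω, A ω, U ω))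
    (hXindep : ∀ x : ℝ,
      μ[Set.indicator {ω | X ω ≤ x} (fun _ => (1 : ℝ)) |
          MeasurableSpace.comap (fun ω => (Z ω, A ω, W ω)) inferInstance]
        =ᵐ[μ] μ[Set.indicator {ω | X ω ≤ x} (fun _ => (1 : ℝ)) |
          MeasurableSpace.comap (fun ω => (Z ω, W ω)) inferInstance])
    (hUindep : ∀ u : ℝ,
      μ[Set.indicator {ω | U ω ≤ u} (fun _ => (1 : ℝ)) |
          MeasurableSpace.comap (fun ω => (Z ω, A ω, W ω)) inferInstance]
        =ᵐ[μ] μ[Set.indicator {ω | U ω ≤ u} (fun _ => (1 : ℝ)) |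
          MeasurableSpace.comap (fun ω => (A ω, W ω)) inferInstance]) :
    (fun ω => condDistrib X (fun ω' => (Z ω', W ω')) μ (Z ω, W ω) (Set.Iic (X ω)))
      =ᵐ[μ]
      (fun ω => condDistrib U (fun ω' => (A ω', W ω')) μ (A ω, W ω) (Set.Iic (U ω))) := by
  have hX' : Measurable X := by
    have hXe : X = fun ω => g (Z ω, A ω, U ω) := funext hX
    rw [hXe]; exact hg.comp (hZ.prod (hA.prod hU))
  set T : Ω → E_Z × E_A × E_W := fun ω => (Z ω, A ω, W ω) with hT_def
  have hT : Measurable T := hZ.prod (hA.prod hW)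
  have hZW : Measurable fun ω => (Z ω, W ω) := hZ.prod hW
  have hAW : Measurable fun ω => (A ω, W ω) := hA.prod hW
  -- Step A: conditional independence of X and A given (Z, W)
  have hstepA : ∀ᵐ ω ∂μ,
      condDistrib X T μ (T ω) = condDistrib X (fun ω' => (Z ω', W ω')) μ (Z ω, W ω) :=
    condDistrib_ae_eq_of_condexp_ae_eq μ X hX' T _ hT hZW (fun q => hXindep (q : ℝ))
  -- Step C: conditional independence of U and Z given (A, W)
  have hstepC : ∀ᵐ ω ∂μ,
      condDistrib U T μ (T ω) = condDistrib U (fun ω' => (A ω', W ω')) μ (A ω, W ω) :=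
    condDistrib_ae_eq_of_condexp_ae_eq μ U hU T _ hT hAW (fun q => hUindep (q : ℝ))
  -- Step B: condDistrib of X given T is the image of condDistrib of U given T
  set η : Kernel (E_Z × E_A × E_W) ℝ := condDistrib U T μ with hη_def
  set F : (E_Z × E_A × E_W) × ℝ → ℝ := fun p => g (p.1.1, p.1.2.1, p.2) with hF_def
  have hF : Measurable F := hg.comp (by fun_prop)
  set η' : Kernel (E_Z × E_A × E_W) ℝ := Kernel.map (Kernel.id ×ₖ η) F with hη'_def
  haveI : IsMarkovKernel η' := Kernel.IsMarkovKernel.map _ hF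
  have hη'_apply : ∀ t, η' t = (η t).map (fun u => F (t, u)) := by
    intro t
    rw [hη'_def, Kernel.map_apply _ hF, Kernel.prod_apply, Kernel.id_apply, Measure.dirac_prod,
      Measure.map_map hF measurable_prodMk_left]
    rfl
  have h1 : μ.map (fun ω => (T ω, U ω)) = μ.map T ⊗ₘ η := by
    have hfst : μ.map T = (μ.map fun ω => (T ω, U ω)).fst := (Measure.fst_map_prodMk hU).symm
    rw [hη_def, condDistrib_def, hfst, Measure.disintegrate]
  have hGF : Measurable fun p : (E_Z × E_A × E_W) × ℝ => (p.1, F p) :=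
    measurable_fst.prodMk hF
  have h2 : μ.map (fun ω => (T ω, X ω))
      = (μ.map fun ω => (T ω, U ω)).map (fun p => (p.1, F p)) := by
    rw [Measure.map_map hGF (hT.prod hU)]
    congr 1
    funext ω
    simp only [Function.comp, hF_def, hT_def]
    rw [hX ω]
  have h3 : (μ.map T ⊗ₘ η).map (fun p => (p.1, F p)) = μ.map T ⊗ₘ η' := by
    ext s hs
    rw [Measure.map_apply hGF hs,
      Measure.compProd_apply (hGF hs),
      Measure.compProd_apply hs]
    refine lintegral_congr fun t => ?_
    rw [hη'_apply t,
      Measure.map_apply (f := fun u => F (t, u)) (hF.comp measurable_prodMk_left)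
        (measurable_prodMk_left hs)]
    rfl
  have hcomp : μ.map (fun ω => (T ω, X ω)) = μ.map T ⊗ₘ η' := by rw [h2, h1, h3]
  have hB0 : ∀ᵐ t ∂μ.map T, η' t = condDistrib X T μ t :=
    (condDistrib_ae_eq_of_measure_eq_compProd T hX'.aemeasurable hcomp).mono fun t h => h.symm
  have hB : ∀ᵐ ω ∂μ, η' (T ω) = condDistrib X T μ (T ω) := ae_of_ae_map hT.aemeasurable hB0
  -- Combine
  filter_upwards [hstepA, hstepC, hB] with ω hA' hC' hB'
  rw [← hA', ← hB', hη'_apply,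
    Measure.map_apply (f := fun u => F (T ω, u)) (hF.comp measurable_prodMk_left)
      measurableSet_Iic]
  have hset : (fun u => F (T ω, u)) ⁻¹' Set.Iic (X ω) = Set.Iic (U ω) := by
    ext u
    simp only [Set.mem_preimage, Set.mem_Iic, hF_def, hT_def, hX ω]
    exact (hmono (Z ω) (A ω)).le_iff_le
  rw [hset, hη_def, hC']
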